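/- K = B^{op}·T_{1,1}, i.e., every element of K factors as b·t with b a lower triangular matrix in K and t ∈ T_{1,1}. Consequently, also K^η = (B^{op})^η·(T_{1,1})^η, where H^η := ηHη^{−1} and η = diag(1,ϖ). -/

import Mathlib

open Matrix
open scoped Pointwise

noncomputable section

/-- Ambient data for the paper: `E` is the unramified quadratic extension `F(√ε)` of a
nonarchimedean local field `F` of odd residual characteristic.  The field `F` is realized
as the fixed field of the nontrivial `F`-automorphism `σ` of `E`; `ν` is the discrete
valuation of `E` (extending the valuation of `F` normalized by `ν ϖ = 1` at a uniformizer
`ϖ` of `F`, and still surjecting onto `ℤ` since `E/F` is unramified); `q` is the (odd)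
cardinality of the residue field of `F` (so `q²` is that of `E`); `ε ∈ O_F^×` is a
non-square unit and `sqε = √ε` generates `E` over `F`.  The standard facts about the
norm map and squares are included as fields. -/
structure Setting (E : Type*) [Field E] where
  /-- the nontrivial `F`-automorphism of `E`, written `x̄ = σ x` -/
  σ : E →+* E
  σσ : ∀ x, σ (σ x) = x
  σ_ne_id : σ ≠ RingHom.id E
  /-- the valuation (only its values at nonzero elements matter) -/
  ν : E → ℤ
  ν_mul : ∀ {x y : E}, x ≠ 0 → y ≠ 0 → ν (x * y) = ν x + ν y
  ν_add : ∀ {x y : E}, x ≠ 0 → y ≠ 0 → x + y ≠ 0 → min (ν x) (ν y) ≤ ν (x + y)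
  ν_σ : ∀ x, ν (σ x) = ν x
  ν_surj : ∀ n : ℤ, ∃ x : E, x ≠ 0 ∧ ν x = n
  /-- a uniformizer of `F` -/
  ϖ : E
  ϖ_ne_zero : ϖ ≠ 0
  ϖ_fixed : σ ϖ = ϖ
  ν_ϖ : ν ϖ = 1
  /-- the residual cardinality of `F` -/
  q : ℕ
  q_odd : Odd q
  one_lt_q : 1 < q
  /-- a non-square unit of `O_F` -/
  ε : E
  ε_fixed : σ ε = ε
  ε_ne_zero : ε ≠ 0
  ν_ε : ν ε = 0
  ε_nonsquare : ¬ ∃ f : E, σ f = f ∧ f * f = ε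
  /-- a square root `√ε ∈ E` of `ε` -/
  sqε : E
  sqε_sq : sqε * sqε = ε
  sqε_conj : σ sqε = -sqε
  /-- `E = F(√ε)` -/
  generates : ∀ x : E, ∃ a b : E, σ a = a ∧ σ b = b ∧ x = a + b * sqε
  /-- the norm maps `O_E^×` onto `O_F^×` -/
  norm_surj_units : ∀ y : E, σ y = y → y ≠ 0 → ν y = 0 →
    ∃ x : E, x ≠ 0 ∧ ν x = 0 ∧ x * σ x = y
  /-- the norm maps `1 + p_E^d` onto `1 + p_F^d` for every `d ≥ 1` -/
  norm_surj_one_add : ∀ d : ℤ, 1 ≤ d → ∀ y : E, σ y = y → (y - 1 = 0 ∨ d ≤ ν (y - 1)) →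
    ∃ x : E, (x - 1 = 0 ∨ d ≤ ν (x - 1)) ∧ x * σ x = y
  /-- the residue field of `F` has `q` elements -/
  residue_F : ∃ R : Finset E, R.card = q ∧ (∀ r ∈ R, σ r = r ∧ (r = 0 ∨ 0 ≤ ν r)) ∧
    ∀ x : E, σ x = x → (x = 0 ∨ 0 ≤ ν x) →
      ∃! r, r ∈ R ∧ (x - r = 0 ∨ 1 ≤ ν (x - r))
  /-- the residue field of `E` has `q²` elements -/
  residue_E : ∃ R : Finset E, R.card = q ^ 2 ∧ (∀ r ∈ R, r = 0 ∨ 0 ≤ ν r) ∧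
    ∀ x : E, (x = 0 ∨ 0 ≤ ν x) →
      ∃! r, r ∈ R ∧ (x - r = 0 ∨ 1 ≤ ν (x - r))
  /-- Hensel: a unit of `O_E` that is a square modulo `p_E` is a square (residue char. odd) -/
  hensel_sq : ∀ u w : E, u ≠ 0 → ν u = 0 → w ≠ 0 → ν w = 0 →
    (w * w - u = 0 ∨ 1 ≤ ν (w * w - u)) → ∃ v : E, v * v = u

namespace Setting

variable {E : Type*} [Field E] (S : Setting E)

/-- `x` lies in the ring of integers `O_E`. -/
def inOE (x : E) : Prop := x = 0 ∨ 0 ≤ S.ν x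

/-- `x` lies in the (fractional, if `d ≤ 0`) ideal `p_E^d`. -/
def inpE (d : ℤ) (x : E) : Prop := x = 0 ∨ d ≤ S.ν x

/-- `x` is a unit of `O_E`. -/
def unitOE (x : E) : Prop := x ≠ 0 ∧ S.ν x = 0

/-- `x` lies in the subfield `F` (the fixed field of `σ`). -/
def inF (x : E) : Prop := S.σ x = x

/-- `x` is a unit of `O_F`. -/
def unitOF (x : E) : Prop := S.σ x = x ∧ x ≠ 0 ∧ S.ν x = 0

/-- `x` lies in `E¹`, i.e. has norm one. -/
def normOne (x : E) : Prop := x * S.σ x = 1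

/-- `x ∈ √ε·F`. -/
def inSqεF (x : E) : Prop := ∃ f : E, S.σ f = f ∧ x = S.sqε * f

/-- Entrywise application of `σ` to a matrix, `ḡ`. -/
def mbar (g : Matrix (Fin 2) (Fin 2) E) : Matrix (Fin 2) (Fin 2) E :=
  Matrix.of fun i j => S.σ (g i j)

/-- The antidiagonal matrix `w = [[0,1],[1,0]]` defining the hermitian form. -/
def wmat (_S : Setting E) : Matrix (Fin 2) (Fin 2) E := !![0, 1; 1, 0]

/-- Membership in `G = U(1,1)(F) = {g : ḡᵀ·w·g = w}`. -/
def inG (g : Matrix (Fin 2) (Fin 2) E) : Prop :=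
  (S.mbar g)ᵀ * S.wmat * g = S.wmat

/-- `G = U(1,1)(F)`, as a set of 2×2 matrices over `E`. -/
def Gset : Set (Matrix (Fin 2) (Fin 2) E) := {g | S.inG g}

/-- `G_der = SU(1,1)(F) = {g ∈ G : det g = 1}`. -/
def Gder : Set (Matrix (Fin 2) (Fin 2) E) := {g | S.inG g ∧ g.det = 1}

/-- The standard maximal compact subgroup `K` of `G` (entries in `O_E`). -/
def Kset : Set (Matrix (Fin 2) (Fin 2) E) := {g | S.inG g ∧ ∀ i j, S.inOE (g i j)}

/-- The congruence subgroup `K_d = {k ∈ K : k − 1 ∈ p_E^d·M₂(O_E)}`. -/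
def Kfil (d : ℤ) : Set (Matrix (Fin 2) (Fin 2) E) :=
  {g | g ∈ S.Kset ∧ ∀ i j, S.inpE d ((g - 1) i j)}

/-- The subgroup `B` of upper triangular matrices in `K`. -/
def Bset : Set (Matrix (Fin 2) (Fin 2) E) := {g | g ∈ S.Kset ∧ g 1 0 = 0}

/-- The subgroup `B^op` of lower triangular matrices in `K`. -/
def Bop : Set (Matrix (Fin 2) (Fin 2) E) := {g | g ∈ S.Kset ∧ g 0 1 = 0}

/-- The center `Z = {z·I : z ∈ E¹}` of `G`. -/
def Zset : Set (Matrix (Fin 2) (Fin 2) E) :=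
  {g | ∃ z : E, S.normOne z ∧ g = z • (1 : Matrix (Fin 2) (Fin 2) E)}

/-- The matrix `α^t = diag(ϖ^{−t}, ϖ^t)`. -/
def αmat (t : ℕ) : Matrix (Fin 2) (Fin 2) E := !![(S.ϖ ^ t)⁻¹, 0; 0, S.ϖ ^ t]

/-- The matrix `η = diag(1, ϖ)` (it normalizes `G`). -/
def ηmat : Matrix (Fin 2) (Fin 2) E := !![1, 0; 0, S.ϖ]

/-- The matrix `η⁻¹ = diag(1, ϖ⁻¹)`. -/
def ηinv : Matrix (Fin 2) (Fin 2) E := !![1, 0; 0, S.ϖ⁻¹]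

/-- The torus `T_{γ₁,γ₂} = {[[a,bγ₁],[bγ₂,a]] : a·ā + b·b̄·γ₁γ₂ = 1, ā·b ∈ √ε·F}`. -/
def Tset (γ₁ γ₂ : E) : Set (Matrix (Fin 2) (Fin 2) E) :=
  {g | ∃ a b : E, g = !![a, b * γ₁; b * γ₂, a] ∧
    a * S.σ a + b * S.σ b * (γ₁ * γ₂) = 1 ∧ S.inSqεF (S.σ a * b)}

/-- The Moy–Prasad filtration subgroup `G_{y,r}` of `G` (for `r > 0`). -/
def Gfil (y r : ℚ) : Set (Matrix (Fin 2) (Fin 2) E) :=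
  {g | S.inG g ∧ S.inpE ⌈r⌉ (g 0 0 - 1) ∧ S.inpE ⌈r⌉ (g 1 1 - 1) ∧
    S.inpE ⌈r - y⌉ (g 0 1) ∧ S.inpE ⌈r + y⌉ (g 1 0)}

/-- `G_{y,0+} = ⋃_{r>0} G_{y,r}`. -/
def Gfil0plus (y : ℚ) : Set (Matrix (Fin 2) (Fin 2) E) :=
  {g | ∃ r : ℚ, 0 < r ∧ g ∈ S.Gfil y r}

end Setting
namespace Setting

variable {E : Type*} [Field E] (S : Setting E)

lemma two_ne_zero' (S : Setting E) : (2 : E) ≠ 0 := by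
  intro h
  apply S.σ_ne_id
  have hm1 : (-1 : E) = 1 := by linear_combination -h
  have : ∀ x : E, S.σ x = x := by
    intro x
    obtain ⟨a, b, ha, hb, rfl⟩ := S.generates x
    rw [map_add, _root_.map_mul, ha, hb, S.sqε_conj]
    rw [show -S.sqε = (-1 : E) * S.sqε by ring, hm1, one_mul]
  exact RingHom.ext this

lemma ν_one : S.ν 1 = 0 := by
  have := S.ν_mul (one_ne_zero (α := E)) (one_ne_zero (α := E))
  rw [one_mul] at this; omega

lemma ν_neg_one : S.ν (-1 : E) = 0 := by
  have h := S.ν_mul (neg_ne_zero.mpr (one_ne_zero (α := E)))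
    (neg_ne_zero.mpr (one_ne_zero (α := E)))
  rw [show (-1 : E) * -1 = 1 by ring, S.ν_one] at h; omega

lemma ν_neg {x : E} (hx : x ≠ 0) : S.ν (-x) = S.ν x := by
  rw [show -x = (-1 : E) * x by ring, S.ν_mul (neg_ne_zero.mpr one_ne_zero) hx,
    S.ν_neg_one, zero_add]

lemma ν_inv {x : E} (hx : x ≠ 0) : S.ν x⁻¹ = -S.ν x := by
  have := S.ν_mul hx (inv_ne_zero hx)
  rw [mul_inv_cancel₀ hx, S.ν_one] at this; omega

lemma ν_div {x y : E} (hx : x ≠ 0) (hy : y ≠ 0) : S.ν (x / y) = S.ν x - S.ν y := by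
  rw [div_eq_mul_inv, S.ν_mul hx (inv_ne_zero hy), S.ν_inv hy]; ring

lemma σ_ne_zero {x : E} (hx : x ≠ 0) : S.σ x ≠ 0 := by
  intro h
  apply hx
  have := congrArg S.σ h
  rwa [S.σσ, map_zero] at this

lemma ν_add_eq_left {x y : E} (hx : x ≠ 0) (hy : y ≠ 0) (h : S.ν x < S.ν y) :
    S.ν (x + y) = S.ν x := by
  have hxy : x + y ≠ 0 := by
    intro h0
    have : y = -x := by linear_combination h0
    rw [this, S.ν_neg hx] at h; omega
  have h1 := S.ν_add hx hy hxy
  have h2 := S.ν_add hxy (neg_ne_zero.mpr hy) (by simpa using hx)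
  rw [show x + y + -y = x by ring] at h2
  rw [S.ν_neg hy] at h2
  omega

lemma inpE_add {d : ℤ} {x y : E} (hx : S.inpE d x) (hy : S.inpE d y) : S.inpE d (x + y) := by
  rcases eq_or_ne x 0 with rfl | hx0
  · rw [zero_add]; exact hy
  rcases eq_or_ne y 0 with rfl | hy0
  · rw [add_zero]; exact hx
  rcases hx with h | hx
  · exact absurd h hx0
  rcases hy with h | hy
  · exact absurd h hy0
  by_cases h0 : x + y = 0
  · exact Or.inl h0
  exact Or.inr (le_trans (le_min hx hy) (S.ν_add hx0 hy0 h0))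

lemma inpE_neg {d : ℤ} {x : E} (hx : S.inpE d x) : S.inpE d (-x) := by
  rcases eq_or_ne x 0 with rfl | hx0
  · rw [neg_zero]; exact hx
  rcases hx with h | hx
  · exact absurd h hx0
  exact Or.inr (by rw [S.ν_neg hx0]; exact hx)

lemma inOE_add {x y : E} (hx : S.inOE x) (hy : S.inOE y) : S.inOE (x + y) :=
  S.inpE_add (d := 0) hx hy

lemma inOE_mul {x y : E} (hx : S.inOE x) (hy : S.inOE y) : S.inOE (x * y) := by
  rcases eq_or_ne x 0 with rfl | hx0
  · exact Or.inl (zero_mul y)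
  rcases eq_or_ne y 0 with rfl | hy0
  · exact Or.inl (mul_zero x)
  rcases hx with h | hx
  · exact absurd h hx0
  rcases hy with h | hy
  · exact absurd h hy0
  exact Or.inr (by rw [S.ν_mul hx0 hy0]; omega)

lemma inOE_σ {x : E} (hx : S.inOE x) : S.inOE (S.σ x) := by
  rcases eq_or_ne x 0 with rfl | hx0
  · exact Or.inl (map_zero _)
  rcases hx with h | hx
  · exact absurd h hx0
  exact Or.inr (by rw [S.ν_σ]; exact hx)

lemma inpE_mul_OE {d : ℤ} {x z : E} (hx : S.inpE d x) (hz : S.inOE z) : S.inpE d (x * z) := by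
  rcases eq_or_ne x 0 with rfl | hx0
  · exact Or.inl (zero_mul z)
  rcases eq_or_ne z 0 with rfl | hz0
  · exact Or.inl (mul_zero x)
  rcases hx with h | hx
  · exact absurd h hx0
  rcases hz with h | hz
  · exact absurd h hz0
  exact Or.inr (by rw [S.ν_mul hx0 hz0]; omega)

lemma unit_of_not_inpE {x : E} (hx : S.inOE x) (h : ¬ S.inpE 1 x) : x ≠ 0 ∧ S.ν x = 0 := by
  rcases eq_or_ne x 0 with rfl | hx0
  · exact absurd (Or.inl rfl) h
  rcases hx with h' | hx
  · exact absurd h' hx0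
  refine ⟨hx0, ?_⟩
  by_contra hne
  exact h (Or.inr (by omega))

lemma sqε_ne_zero : S.sqε ≠ 0 := by
  intro h
  exact S.ε_ne_zero (by rw [← S.sqε_sq, h, mul_zero])

lemma ν_sqε : S.ν S.sqε = 0 := by
  have := S.ν_mul S.sqε_ne_zero S.sqε_ne_zero
  rw [S.sqε_sq, S.ν_ε] at this; omega

lemma inSqεF_of_anti {x : E} (h : S.σ x = -x) : S.inSqεF x := by
  refine ⟨x / S.sqε, ?_, ?_⟩
  · rw [map_div₀, h, S.sqε_conj, neg_div_neg_eq]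
  · rw [mul_div_cancel₀ _ S.sqε_ne_zero]

end Setting
open Classical in
lemma even_card_of_invol {α : Type*} [DecidableEq α] :
    ∀ (s : Finset α) (f : α → α), (∀ a ∈ s, f a ∈ s) → (∀ a ∈ s, f (f a) = a) →
      (∀ a ∈ s, f a ≠ a) → Even s.card := by
  intro s
  induction s using Finset.strongInduction with
  | _ s ih =>
    intro f hmem hinv hne
    rcases s.eq_empty_or_nonempty with rfl | ⟨a, ha⟩
    · simp
    · have hfa : f a ∈ s := hmem a ha
      have hfa' : f a ≠ a := hne a ha
      set s' := (s.erase a).erase (f a) with hs'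
      have hmem' : ∀ b, b ∈ s' ↔ b ∈ s ∧ b ≠ a ∧ b ≠ f a := by
        intro b
        simp only [hs', Finset.mem_erase]
        tauto
      have hsub : s' ⊂ s := by
        refine Finset.ssubset_iff_of_subset (fun b hb => ((hmem' b).mp hb).1) |>.mpr ?_
        exact ⟨a, ha, fun h => (((hmem' a).mp h).2.1 rfl)⟩
      have hcard2 : 2 ≤ s.card := Finset.one_lt_card.mpr ⟨a, ha, f a, hfa, Ne.symm hfa'⟩
      have hcard : s.card = s'.card + 2 := by
        rw [hs', Finset.card_erase_of_mem (Finset.mem_erase.mpr ⟨hfa', hfa⟩),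
          Finset.card_erase_of_mem ha]
        omega
      have heven : Even s'.card := by
        refine ih s' hsub f ?_ ?_ ?_
        · intro b hb
          obtain ⟨hbs, hba, hbfa⟩ := (hmem' b).mp hb
          refine (hmem' (f b)).mpr ⟨hmem b hbs, ?_, ?_⟩
          · intro h
            exact hbfa (by rw [← hinv b hbs, h])
          · intro h
            apply hba
            have := congrArg f h
            rwa [hinv b hbs, hinv a ha] at this
        · intro b hb
          exact hinv b (((hmem' b).mp hb).1)
        · intro b hb
          exact hne b (((hmem' b).mp hb).1)
      rw [hcard]
      exact heven.add even_two

namespace Setting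

variable {E : Type*} [Field E] (S : Setting E)

lemma ν_two : S.ν 2 = 0 := by
  have h2 : (2 : E) ≠ 0 := S.two_ne_zero'
  have h2O : S.inOE 2 := by
    have := S.inOE_add (x := 1) (y := 1) (Or.inr (le_of_eq S.ν_one.symm))
      (Or.inr (le_of_eq S.ν_one.symm))
    rwa [one_add_one_eq_two] at this
  by_contra h
  have hν2 : 1 ≤ S.ν 2 := by
    rcases h2O with h' | h'
    · exact absurd h' h2
    · omega
  obtain ⟨R, hcard, hmemR, hrep⟩ := S.residue_F
  classical
  have key : ∀ r : E, ∃ r', r ∈ R → (r' ∈ R ∧ ((r + 1) - r' = 0 ∨ 1 ≤ S.ν ((r + 1) - r'))) := by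
    intro r
    by_cases hr : r ∈ R
    · have h1 : S.σ (r + 1) = r + 1 := by rw [map_add, _root_.map_one, (hmemR r hr).1]
      have h2' : S.inOE (r + 1) := S.inOE_add (hmemR r hr).2 (Or.inr (le_of_eq S.ν_one.symm))
      obtain ⟨r', hr'⟩ := (hrep (r + 1) h1 h2').exists
      exact ⟨r', fun _ => hr'⟩
    · exact ⟨r, fun h' => absurd h' hr⟩
  choose f hf using key
  -- f is an involution on R without fixed points
  have uniq : ∀ x : E, S.σ x = x → S.inOE x → ∀ r1 ∈ R, ∀ r2 ∈ R,
      (x - r1 = 0 ∨ 1 ≤ S.ν (x - r1)) → (x - r2 = 0 ∨ 1 ≤ S.ν (x - r2)) → r1 = r2 := by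
    intro x hσ hO r1 h1 r2 h2 hp1 hp2
    obtain ⟨r, hr, hu⟩ := hrep x hσ hO
    rw [hu r1 ⟨h1, hp1⟩, hu r2 ⟨h2, hp2⟩]
  have hνone : S.ν 1 = 0 := S.ν_one
  have hinv : ∀ r ∈ R, f (f r) = r := by
    intro r hr
    obtain ⟨hfrR, hfrp⟩ := hf r hr
    obtain ⟨hffrR, hffrp⟩ := hf (f r) hfrR
    -- (f r + 1) - r ∈ p : (f r + 1) - r = -( (r+1) - f r ) + 2
    have hp2 : ((f r + 1) - r = 0 ∨ 1 ≤ S.ν ((f r + 1) - r)) := by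
      have := S.inpE_add (d := 1) (S.inpE_neg hfrp) (Or.inr hν2)
      rw [show -((r + 1) - f r) + 2 = (f r + 1) - r by ring] at this
      exact this
    have hσfr : S.σ (f r + 1) = f r + 1 := by
      rw [map_add, _root_.map_one, (hmemR (f r) hfrR).1]
    have hOfr : S.inOE (f r + 1) :=
      S.inOE_add (hmemR (f r) hfrR).2 (Or.inr (le_of_eq hνone.symm))
    exact (uniq (f r + 1) hσfr hOfr (f (f r)) hffrR r hr hffrp hp2).symm ▸
      (uniq (f r + 1) hσfr hOfr (f (f r)) hffrR r hr hffrp hp2)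
  have hnofix : ∀ r ∈ R, f r ≠ r := by
    intro r hr hfix
    obtain ⟨_, hfrp⟩ := hf r hr
    rw [hfix, show (r + 1) - r = 1 by ring] at hfrp
    rcases hfrp with h' | h'
    · exact one_ne_zero h'
    · omega
  have heven : Even R.card :=
    even_card_of_invol R f (fun r hr => (hf r hr).1) hinv hnofix
  rw [hcard] at heven
  exact (Nat.not_even_iff_odd.mpr S.q_odd) heven

-- decomposition of an integral element into integral F-parts
lemma inOE_parts {r a b : E} (ha : S.σ a = a) (hb : S.σ b = b) (hr : r = a + b * S.sqε)
    (hint : S.inOE r) : S.inOE a ∧ S.inOE b := by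
  have h2 : (2 : E) ≠ 0 := S.two_ne_zero'
  have hν2 : S.ν 2 = 0 := S.ν_two
  have hσr : S.σ r = a - b * S.sqε := by
    rw [hr, map_add, _root_.map_mul, ha, hb, S.sqε_conj]; ring
  have hOσr : S.inOE (S.σ r) := S.inOE_σ hint
  have h2a : 2 * a = r + S.σ r := by rw [hσr, hr]; ring
  have h2b : 2 * b * S.sqε = r - S.σ r := by rw [hσr, hr]; ring
  constructor
  · rcases eq_or_ne a 0 with rfl | ha0
    · exact Or.inl rfl
    · have hsum : S.inOE (r + S.σ r) := S.inOE_add hint hOσr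
      rw [← h2a] at hsum
      rcases hsum with h' | h'
      · exact absurd h' (by simp [h2, ha0])
      · right
        rw [S.ν_mul h2 ha0, hν2, zero_add] at h'
        exact h'
  · rcases eq_or_ne b 0 with rfl | hb0
    · exact Or.inl rfl
    · have hsum : S.inOE (r - S.σ r) := by
        rw [sub_eq_add_neg]
        exact S.inOE_add hint (S.inpE_neg hOσr)
      rw [← h2b] at hsum
      rcases hsum with h' | h'
      · refine absurd h' ?_
        simp [h2, hb0, S.sqε_ne_zero]
      · right
        rw [S.ν_mul (mul_ne_zero h2 hb0) S.sqε_ne_zero, S.ν_mul h2 hb0, hν2, S.ν_sqε] at h'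
        omega

/-- Key lemma: `ε` is not a square modulo `p_E` of an element of `F`. -/
lemma keyA (t : E) (ht : S.σ t = t) (hc : S.ε - t * t = 0 ∨ 1 ≤ S.ν (S.ε - t * t)) : False := by
  by_cases h0 : S.ε - t * t = 0
  · exact S.ε_nonsquare ⟨t, ht, by linear_combination -h0⟩
  replace hc : 1 ≤ S.ν (S.ε - t * t) := by tauto
  have h2 : (2 : E) ≠ 0 := S.two_ne_zero'
  -- t is a unit
  have ht0 : t ≠ 0 := by
    rintro rfl
    rw [mul_zero, sub_zero] at hc
    rw [S.ν_ε] at hc; omega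
  have htt0 : t * t ≠ 0 := mul_ne_zero ht0 ht0
  have hνtt : S.ν (t * t) = 0 := by
    have hup : 0 ≤ S.ν (t * t) := by
      have := S.ν_add (x := S.ε) (y := -(S.ε - t * t)) S.ε_ne_zero
        (neg_ne_zero.mpr h0) (by rw [show S.ε + -(S.ε - t*t) = t*t by ring]; exact htt0)
      rw [show S.ε + -(S.ε - t*t) = t*t by ring, S.ν_ε, S.ν_neg h0] at this
      omega
    by_contra hne
    have h1le : 1 ≤ S.ν (t * t) := by omega
    have := S.ν_add (x := t * t) (y := S.ε - t * t) htt0 h0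
      (by rw [show t*t + (S.ε - t*t) = S.ε by ring]; exact S.ε_ne_zero)
    rw [show t*t + (S.ε - t*t) = S.ε by ring, S.ν_ε] at this
    omega
  have hνt : S.ν t = 0 := by
    have := S.ν_mul ht0 ht0; omega
  -- one of sqε ± t has positive valuation
  have hm : S.sqε - t ≠ 0 := by
    intro h'
    have : S.sqε = t := by linear_combination h'
    have h1 := S.sqε_conj
    rw [this, ht] at h1
    have : (2 : E) * t = 0 := by linear_combination h1
    rcases mul_eq_zero.mp this with h'' | h''
    · exact h2 h''
    · exact ht0 h''
  have hp : S.sqε + t ≠ 0 := by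
    intro h'
    have : S.sqε = -t := by linear_combination h'
    have h1 := S.sqε_conj
    rw [this, map_neg, ht] at h1
    have : (2 : E) * t = 0 := by linear_combination -h1
    rcases mul_eq_zero.mp this with h'' | h''
    · exact h2 h''
    · exact ht0 h''
  have hfac : S.ν (S.sqε - t) + S.ν (S.sqε + t) = S.ν (S.ε - t * t) := by
    rw [← S.ν_mul hm hp]
    congr 1
    linear_combination S.sqε_sq
  have hm0 : 0 ≤ S.ν (S.sqε - t) := by
    have := S.ν_add S.sqε_ne_zero (neg_ne_zero.mpr ht0) (by rwa [← sub_eq_add_neg])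
    rw [← sub_eq_add_neg, S.ν_neg ht0, S.ν_sqε, hνt] at this
    omega
  have hp0 : 0 ≤ S.ν (S.sqε + t) := by
    have := S.ν_add S.sqε_ne_zero ht0 hp
    rw [S.ν_sqε, hνt] at this
    omega
  -- choose t₀
  obtain ⟨t₀, ht₀σ, ht₀0, ht₀ν, ht₀⟩ :
        ∃ t₀ : E, S.σ t₀ = t₀ ∧ t₀ ≠ 0 ∧ S.ν t₀ = 0 ∧ 1 ≤ S.ν (S.sqε - t₀) := by
    by_cases hcase : 1 ≤ S.ν (S.sqε - t)
    · exact ⟨t, ht, ht0, hνt, hcase⟩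
    · refine ⟨-t, by rw [map_neg, ht], neg_ne_zero.mpr ht0, by rw [S.ν_neg ht0]; exact hνt, ?_⟩
      rw [sub_neg_eq_add]
      omega
  -- residue counting
  obtain ⟨RE, hREcard, hREmem, hRErep⟩ := S.residue_E
  obtain ⟨RF, hRFcard, hRFmem, hRFrep⟩ := S.residue_F
  classical
  have key : ∀ r : E, ∃ r', r ∈ RE → (r' ∈ RF ∧ (r - r' = 0 ∨ 1 ≤ S.ν (r - r'))) := by
    intro r
    by_cases hr : r ∈ RE
    · obtain ⟨a, b, ha, hb, hab⟩ := S.generates r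
      obtain ⟨hOa, hOb⟩ := S.inOE_parts ha hb hab (hREmem r hr)
      have hx : S.σ (a + b * t₀) = a + b * t₀ := by
        rw [map_add, _root_.map_mul, ha, hb, ht₀σ]
      have hOx : S.inOE (a + b * t₀) :=
        S.inOE_add hOa (S.inOE_mul hOb (Or.inr (le_of_eq ht₀ν.symm)))
      obtain ⟨r', ⟨hr'R, hr'p⟩, _⟩ := hRFrep (a + b * t₀) hx hOx
      refine ⟨r', fun _ => ⟨hr'R, ?_⟩⟩
      have hdiff : r - r' = (S.sqε - t₀) * b + ((a + b * t₀) - r') := by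
        rw [hab]; ring
      rw [hdiff]
      refine S.inpE_add ?_ hr'p
      refine S.inpE_mul_OE (d := 1) ?_ hOb
      rcases eq_or_ne (S.sqε - t₀) 0 with h' | h'
      · exact Or.inl h'
      · exact Or.inr ht₀
    · exact ⟨r, fun h' => absurd h' hr⟩
  choose φ hφ using key
  have hinj : ∀ r1 ∈ RE, ∀ r2 ∈ RE, φ r1 = φ r2 → r1 = r2 := by
    intro r1 h1 r2 h2 heq
    obtain ⟨hφ1R, hφ1p⟩ := hφ r1 h1
    obtain ⟨hφ2R, hφ2p⟩ := hφ r2 h2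
    -- r1 - r2 ∈ p
    have hdiff : (r1 - r2 = 0 ∨ 1 ≤ S.ν (r1 - r2)) := by
      have := S.inpE_add (d := 1) hφ1p (S.inpE_neg hφ2p)
      rw [heq, show r1 - φ r2 + -(r2 - φ r2) = r1 - r2 by ring] at this
      exact this
    obtain ⟨r, hr, hu⟩ := hRErep r1 (hREmem r1 h1)
    have e1 : r1 = r := hu r1 ⟨h1, Or.inl (sub_self r1)⟩
    have e2 : r2 = r := hu r2 ⟨h2, hdiff⟩
    rw [e1, e2]
  have hcardle : RE.card ≤ RF.card := by
    refine Finset.card_le_card_of_injOn φ (fun r hr => (hφ r hr).1) ?_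
    intro r1 h1 r2 h2 heq
    exact hinj r1 h1 r2 h2 heq
  rw [hREcard, hRFcard] at hcardle
  have hq := S.one_lt_q
  nlinarith [hcardle, hq]

end Setting
namespace Setting

variable {E : Type*} [Field E] (S : Setting E)

lemma mbar_fin (a b c d : E) :
    S.mbar !![a, b; c, d] = !![S.σ a, S.σ b; S.σ c, S.σ d] := by
  ext i j
  fin_cases i <;> fin_cases j <;> simp [mbar]

lemma mbar_mul (g h : Matrix (Fin 2) (Fin 2) E) :
    S.mbar (g * h) = S.mbar g * S.mbar h := by
  ext i j
  simp [mbar, Matrix.mul_apply, Fin.sum_univ_two, map_add, _root_.map_mul]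

lemma wmat_mul_wmat : S.wmat * S.wmat = 1 := by
  rw [wmat, Matrix.one_fin_two]
  norm_num [Matrix.mul_fin_two]

lemma inG_mul {g h : Matrix (Fin 2) (Fin 2) E} (hg : S.inG g) (hh : S.inG h) :
    S.inG (g * h) := by
  unfold inG at *
  rw [S.mbar_mul, Matrix.transpose_mul]
  calc (S.mbar h)ᵀ * (S.mbar g)ᵀ * S.wmat * (g * h)
      = (S.mbar h)ᵀ * ((S.mbar g)ᵀ * S.wmat * g) * h := by
        simp only [Matrix.mul_assoc]
    _ = (S.mbar h)ᵀ * S.wmat * h := by rw [hg]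
    _ = S.wmat := hh

lemma inG_row {g : Matrix (Fin 2) (Fin 2) E} (hg : S.inG g) :
    g * S.wmat * (S.mbar g)ᵀ = S.wmat := by
  have h1 : (S.wmat * ((S.mbar g)ᵀ * S.wmat)) * g = 1 := by
    have := congrArg (fun m => S.wmat * m) hg
    calc (S.wmat * ((S.mbar g)ᵀ * S.wmat)) * g
        = S.wmat * ((S.mbar g)ᵀ * S.wmat * g) := by simp only [Matrix.mul_assoc]
      _ = S.wmat * S.wmat := by rw [hg]
      _ = 1 := S.wmat_mul_wmat
  have h2 : g * (S.wmat * ((S.mbar g)ᵀ * S.wmat)) = 1 := mul_eq_one_comm.mp h1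
  calc g * S.wmat * (S.mbar g)ᵀ
      = g * S.wmat * (S.mbar g)ᵀ * (S.wmat * S.wmat) := by rw [S.wmat_mul_wmat, Matrix.mul_one]
    _ = (g * (S.wmat * ((S.mbar g)ᵀ * S.wmat))) * S.wmat := by simp only [Matrix.mul_assoc]
    _ = S.wmat := by rw [h2, Matrix.one_mul]

lemma row_eqs {g : Matrix (Fin 2) (Fin 2) E} (hg : S.inG g) :
    g 0 0 * S.σ (g 0 1) + g 0 1 * S.σ (g 0 0) = 0 ∧
    g 0 0 * S.σ (g 1 1) + g 0 1 * S.σ (g 1 0) = 1 := by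
  have h := S.inG_row hg
  constructor
  · have h00 := congrFun (congrFun h 0) 0
    simp [wmat, mbar, Matrix.mul_apply, Fin.sum_univ_two] at h00
    linear_combination h00
  · have h01 := congrFun (congrFun h 0) 1
    simp [wmat, mbar, Matrix.mul_apply, Fin.sum_univ_two] at h01
    linear_combination h01

lemma inG_symm_shape {a b : E} (h1 : S.σ a * a + S.σ b * b = 1)
    (h2 : S.σ a * b + S.σ b * a = 0) : S.inG !![a, b; b, a] := by
  unfold inG wmat
  rw [S.mbar_fin]
  have htr : (!![S.σ a, S.σ b; S.σ b, S.σ a])ᵀ = !![S.σ a, S.σ b; S.σ b, S.σ a] := by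
    ext i j
    fin_cases i <;> fin_cases j <;> simp
  rw [htr, Matrix.mul_fin_two, Matrix.mul_fin_two]
  ext i j
  fin_cases i <;> fin_cases j <;> simp <;> first | linear_combination h1 | linear_combination h2 | linear_combination h2 - h1

lemma Kset_mul {x y : Matrix (Fin 2) (Fin 2) E} (hx : x ∈ S.Kset) (hy : y ∈ S.Kset) :
    x * y ∈ S.Kset := by
  refine ⟨S.inG_mul hx.1 hy.1, fun i j => ?_⟩
  rw [Matrix.mul_apply, Fin.sum_univ_two]
  exact S.inOE_add (S.inOE_mul (hx.2 i 0) (hy.2 0 j)) (S.inOE_mul (hx.2 i 1) (hy.2 1 j))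

end Setting
namespace Setting

variable {E : Type*} [Field E] (S : Setting E)

lemma T_entries_int {a b : E} (h1 : a * S.σ a + b * S.σ b = 1)
    (hab : a * S.σ b + S.σ a * b = 0) : S.inOE a ∧ S.inOE b := by
  by_cases ha : a = 0
  · subst ha
    have hb1 : b * S.σ b = 1 := by linear_combination h1
    have hb0 : b ≠ 0 := by
      intro h; rw [h, zero_mul] at hb1; exact one_ne_zero hb1.symm
    have hνb : S.ν b = 0 := by
      have := S.ν_mul hb0 (S.σ_ne_zero hb0)
      rw [hb1, S.ν_one, S.ν_σ] at this; omega
    exact ⟨Or.inl rfl, Or.inr (le_of_eq hνb.symm)⟩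
  by_cases hb : b = 0
  · subst hb
    have ha1 : a * S.σ a = 1 := by linear_combination h1
    have hνa : S.ν a = 0 := by
      have := S.ν_mul ha (S.σ_ne_zero ha)
      rw [ha1, S.ν_one, S.ν_σ] at this; omega
    exact ⟨Or.inr (le_of_eq hνa.symm), Or.inl rfl⟩
  have hσa := S.σ_ne_zero ha
  have hσb := S.σ_ne_zero hb
  have haa0 : a * S.σ a ≠ 0 := mul_ne_zero ha hσa
  have hbb0 : b * S.σ b ≠ 0 := mul_ne_zero hb hσb
  have hνaa : S.ν (a * S.σ a) = 2 * S.ν a := by rw [S.ν_mul ha hσa, S.ν_σ]; ring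
  have hνbb : S.ν (b * S.σ b) = 2 * S.ν b := by rw [S.ν_mul hb hσb, S.ν_σ]; ring
  rcases lt_trichotomy (S.ν a) (S.ν b) with hlt | heq | hgt
  · -- ν a < ν b : ν(sum) = 2 ν a = 0
    have := S.ν_add_eq_left haa0 hbb0 (by omega)
    rw [h1, S.ν_one] at this
    have hνa : S.ν a = 0 := by omega
    exact ⟨Or.inr (le_of_eq hνa.symm), Or.inr (by omega)⟩
  · -- ν a = ν b
    by_cases hge : 0 ≤ S.ν a
    · exact ⟨Or.inr hge, Or.inr (by omega)⟩
    exfalso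
    push_neg at hge
    -- abbreviations (spelled out)
    have hc0 : S.σ a * b ≠ 0 := mul_ne_zero hσa hb
    have hσac : S.σ (S.σ a * b) = -(S.σ a * b) := by
      rw [_root_.map_mul, S.σσ]; linear_combination hab
    have hx2 : (S.σ a * b) * (S.σ a * b) =
        (a * S.σ a) * (a * S.σ a) - (a * S.σ a) := by
      linear_combination (S.σ a * b) * hab - (a * S.σ a) * h1
    have hu : S.σ (((a * S.σ a) * S.sqε) / (S.σ a * b)) =
        ((a * S.σ a) * S.sqε) / (S.σ a * b) := by
      rw [map_div₀, _root_.map_mul, _root_.map_mul, S.σσ, S.sqε_conj, hσac]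
      rw [show S.σ a * a * -S.sqε = -(a * S.σ a * S.sqε) by ring, neg_div_neg_eq]
    apply S.keyA (((a * S.σ a) * S.sqε) / (S.σ a * b)) hu
    have hcalc : S.ε - (((a * S.σ a) * S.sqε) / (S.σ a * b)) *
        (((a * S.σ a) * S.sqε) / (S.σ a * b)) =
        -(S.ε * (a * S.σ a)) / ((S.σ a * b) * (S.σ a * b)) := by
      rw [div_mul_div_comm, sub_eq_iff_eq_add, ← add_div, eq_div_iff (mul_ne_zero hc0 hc0)]
      linear_combination S.ε * hx2 - ((a * S.σ a) * (a * S.σ a)) * S.sqε_sq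
    rw [hcalc]
    right
    have hnum0 : S.ε * (a * S.σ a) ≠ 0 := mul_ne_zero S.ε_ne_zero haa0
    have hden0 : (S.σ a * b) * (S.σ a * b) ≠ 0 := mul_ne_zero hc0 hc0
    have hνc : S.ν (S.σ a * b) = 2 * S.ν a := by
      rw [S.ν_mul hσa hb, S.ν_σ]; omega
    rw [show -(S.ε * (a * S.σ a)) / ((S.σ a * b) * (S.σ a * b)) =
        (-(S.ε * (a * S.σ a))) / ((S.σ a * b) * (S.σ a * b)) by ring,
      S.ν_div (neg_ne_zero.mpr hnum0) hden0, S.ν_neg hnum0,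
      S.ν_mul S.ε_ne_zero haa0, S.ν_mul hc0 hc0, S.ν_ε, hνaa, hνc]
    omega
  · -- ν b < ν a
    have : S.ν (b * S.σ b + a * S.σ a) = S.ν (b * S.σ b) := S.ν_add_eq_left hbb0 haa0 (by omega)
    rw [show b * S.σ b + a * S.σ a = a * S.σ a + b * S.σ b by ring, h1, S.ν_one] at this
    have hνb : S.ν b = 0 := by omega
    exact ⟨Or.inr (by omega), Or.inr (le_of_eq hνb.symm)⟩

lemma T_sub_K : S.Tset 1 1 ⊆ S.Kset := by
  rintro g ⟨a, b, hgeq, hnorm, f, hfσ, hfe⟩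
  simp only [mul_one] at hnorm hgeq
  have hσac : S.σ (S.σ a * b) = -(S.σ a * b) := by
    rw [hfe, _root_.map_mul, S.sqε_conj, hfσ]; ring
  have hab : a * S.σ b + S.σ a * b = 0 := by
    have h' : S.σ (S.σ a * b) = a * S.σ b := by rw [_root_.map_mul, S.σσ]
    rw [h'] at hσac
    linear_combination hσac
  obtain ⟨hOa, hOb⟩ := S.T_entries_int hnorm hab
  rw [hgeq]
  constructor
  · exact S.inG_symm_shape (by linear_combination hnorm) (by linear_combination hab)
  · intro i j
    fin_cases i <;> fin_cases j <;> simp <;> assumption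

lemma K_sub_BT {k : Matrix (Fin 2) (Fin 2) E} (hk : k ∈ S.Kset) :
    ∃ b t, b ∈ S.Bop ∧ t ∈ S.Tset 1 1 ∧ k = b * t := by
  obtain ⟨hG, hint⟩ := hk
  obtain ⟨r1, r2⟩ := S.row_eqs hG
  set α := k 0 0 with hα
  set β := k 0 1 with hβ
  set γ := k 1 0 with hγ
  set δ := k 1 1 with hδ
  have hOα : S.inOE α := hint 0 0
  have hOβ : S.inOE β := hint 0 1
  have hnb : ¬ (S.inpE 1 α ∧ S.inpE 1 β) := by
    rintro ⟨ha, hb⟩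
    have h1' : S.inpE 1 (α * S.σ δ + β * S.σ γ) :=
      S.inpE_add (S.inpE_mul_OE ha (S.inOE_σ (hint 1 1)))
        (S.inpE_mul_OE hb (S.inOE_σ (hint 1 0)))
    rw [r2] at h1'
    rcases h1' with h' | h'
    · exact one_ne_zero h'
    · rw [S.ν_one] at h'; omega
  have hσy : S.σ (α * S.σ α + β * S.σ β) = α * S.σ α + β * S.σ β := by
    rw [map_add, _root_.map_mul, _root_.map_mul, S.σσ, S.σσ]; ring
  have hOy : S.inOE (α * S.σ α + β * S.σ β) :=
    S.inOE_add (S.inOE_mul hOα (S.inOE_σ hOα)) (S.inOE_mul hOβ (S.inOE_σ hOβ))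
  have hab : α * S.σ β + S.σ α * β = 0 := by linear_combination r1
  have hynot : ¬ S.inpE 1 (α * S.σ α + β * S.σ β) := by
    intro hyp
    by_cases hα0 : α = 0
    · obtain ⟨hβ0, hνβ⟩ := S.unit_of_not_inpE hOβ (fun h => hnb ⟨Or.inl hα0, h⟩)
      have he : α * S.σ α + β * S.σ β = β * S.σ β := by rw [hα0]; ring
      rw [he] at hyp
      rcases hyp with h' | h'
      · exact (mul_ne_zero hβ0 (S.σ_ne_zero hβ0)) h'
      · rw [S.ν_mul hβ0 (S.σ_ne_zero hβ0), S.ν_σ, hνβ] at h'; omega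
    by_cases hβ0 : β = 0
    · obtain ⟨hα0', hνα⟩ := S.unit_of_not_inpE hOα (fun h => hnb ⟨h, Or.inl hβ0⟩)
      have he : α * S.σ α + β * S.σ β = α * S.σ α := by rw [hβ0]; ring
      rw [he] at hyp
      rcases hyp with h' | h'
      · exact (mul_ne_zero hα0' (S.σ_ne_zero hα0')) h'
      · rw [S.ν_mul hα0' (S.σ_ne_zero hα0'), S.ν_σ, hνα] at h'; omega
    have hσα := S.σ_ne_zero hα0
    have hσβ := S.σ_ne_zero hβ0
    have haa0 : α * S.σ α ≠ 0 := mul_ne_zero hα0 hσα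
    have hbb0 : β * S.σ β ≠ 0 := mul_ne_zero hβ0 hσβ
    have hνaa : S.ν (α * S.σ α) = 2 * S.ν α := by rw [S.ν_mul hα0 hσα, S.ν_σ]; ring
    have hνbb : S.ν (β * S.σ β) = 2 * S.ν β := by rw [S.ν_mul hβ0 hσβ, S.ν_σ]; ring
    have hνα0 : 0 ≤ S.ν α := by rcases hOα with h' | h'; exacts [absurd h' hα0, h']
    have hνβ0 : 0 ≤ S.ν β := by rcases hOβ with h' | h'; exacts [absurd h' hβ0, h']
    rcases lt_trichotomy (S.ν α) (S.ν β) with hlt | heq | hgt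
    · -- ν α < ν β forces ν α = 0 and ν y = 0
      have hy0 : α * S.σ α + β * S.σ β ≠ 0 := by
        intro h'
        have : β * S.σ β = -(α * S.σ α) := by linear_combination h'
        have h2 := congrArg S.ν this
        rw [S.ν_neg haa0] at h2; omega
      have hνα : S.ν α = 0 := by
        rcases not_and_or.mp hnb with h'' | h''
        · exact (S.unit_of_not_inpE hOα h'').2
        · have := (S.unit_of_not_inpE hOβ h'').2; omega
      have := S.ν_add_eq_left haa0 hbb0 (by omega)
      rcases hyp with h' | h'
      · exact hy0 h'
      · rw [this] at h'; omega
    · -- ν α = ν β : main case, both units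
      have hνα : S.ν α = 0 := by
        rcases not_and_or.mp hnb with h' | h'
        · exact (S.unit_of_not_inpE hOα h').2
        · have := (S.unit_of_not_inpE hOβ h').2; omega
      have hνβ : S.ν β = 0 := by omega
      have hc0 : S.σ α * β ≠ 0 := mul_ne_zero hσα hβ0
      have hσac : S.σ (S.σ α * β) = -(S.σ α * β) := by
        rw [_root_.map_mul, S.σσ]; linear_combination hab
      have hx2 : (S.σ α * β) * (S.σ α * β) = (α * S.σ α) * (α * S.σ α) -
          (α * S.σ α) * (α * S.σ α + β * S.σ β) := by
        linear_combination (S.σ α * β) * hab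
      have hu : S.σ (((α * S.σ α) * S.sqε) / (S.σ α * β)) =
          ((α * S.σ α) * S.sqε) / (S.σ α * β) := by
        rw [map_div₀, _root_.map_mul, _root_.map_mul, S.σσ, S.sqε_conj, hσac]
        rw [show S.σ α * α * -S.sqε = -(α * S.σ α * S.sqε) by ring, neg_div_neg_eq]
      apply S.keyA (((α * S.σ α) * S.sqε) / (S.σ α * β)) hu
      have hcalc : S.ε - (((α * S.σ α) * S.sqε) / (S.σ α * β)) *
          (((α * S.σ α) * S.sqε) / (S.σ α * β)) =
          -(S.ε * ((α * S.σ α) * (α * S.σ α + β * S.σ β))) /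
            ((S.σ α * β) * (S.σ α * β)) := by
        rw [div_mul_div_comm, sub_eq_iff_eq_add, ← add_div, eq_div_iff (mul_ne_zero hc0 hc0)]
        linear_combination S.ε * hx2 - ((α * S.σ α) * (α * S.σ α)) * S.sqε_sq
      rw [hcalc]
      by_cases hy0 : α * S.σ α + β * S.σ β = 0
      · left; rw [hy0]; ring
      · right
        replace hyp : 1 ≤ S.ν (α * S.σ α + β * S.σ β) := by
          rcases hyp with h' | h'; exacts [absurd h' hy0, h']
        have hnum0 : S.ε * ((α * S.σ α) * (α * S.σ α + β * S.σ β)) ≠ 0 :=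
          mul_ne_zero S.ε_ne_zero (mul_ne_zero haa0 hy0)
        have hden0 : (S.σ α * β) * (S.σ α * β) ≠ 0 := mul_ne_zero hc0 hc0
        have hνc : S.ν (S.σ α * β) = 0 := by rw [S.ν_mul hσα hβ0, S.ν_σ]; omega
        rw [show -(S.ε * ((α * S.σ α) * (α * S.σ α + β * S.σ β))) /
            ((S.σ α * β) * (S.σ α * β)) =
            (-(S.ε * ((α * S.σ α) * (α * S.σ α + β * S.σ β)))) /
            ((S.σ α * β) * (S.σ α * β)) by ring,
          S.ν_div (neg_ne_zero.mpr hnum0) hden0, S.ν_neg hnum0,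
          S.ν_mul S.ε_ne_zero (mul_ne_zero haa0 hy0),
          S.ν_mul haa0 hy0, S.ν_mul hc0 hc0, S.ν_ε, hνaa, hνc]
        omega
    · -- ν β < ν α
      have hy0 : α * S.σ α + β * S.σ β ≠ 0 := by
        intro h'
        have : β * S.σ β = -(α * S.σ α) := by linear_combination h'
        have h2 := congrArg S.ν this
        rw [S.ν_neg haa0] at h2; omega
      have hcm : S.ν (β * S.σ β + α * S.σ α) = S.ν (β * S.σ β) :=
        S.ν_add_eq_left hbb0 haa0 (by omega)
      rw [show β * S.σ β + α * S.σ α = α * S.σ α + β * S.σ β by ring] at hcm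
      rcases hyp with h' | h'
      · exact hy0 h'
      · rw [hcm] at h'
        have : S.ν β = 0 := by
          rcases not_and_or.mp hnb with h'' | h''
          · have := (S.unit_of_not_inpE hOα h'').2; omega
          · exact (S.unit_of_not_inpE hOβ h'').2
        omega
  obtain ⟨hy0, hνy⟩ := S.unit_of_not_inpE hOy hynot
  obtain ⟨p, hp0, hνp, hpN⟩ :=
    S.norm_surj_units (α * S.σ α + β * S.σ β) hσy hy0 hνy
  have hσp0 : S.σ p ≠ 0 := S.σ_ne_zero hp0
  -- the torus element and its inverse
  have hnorm : (α / p) * (S.σ α / S.σ p) + (β / p) * (S.σ β / S.σ p) = 1 := by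
    field_simp
    linear_combination -hpN
  have hanti2 : (α / p) * (S.σ β / S.σ p) + (β / p) * (S.σ α / S.σ p) = 0 := by
    field_simp
    linear_combination r1
  have htG : S.inG !![α / p, β / p; β / p, α / p] :=
    S.inG_symm_shape (by rw [map_div₀, map_div₀]; linear_combination hnorm)
      (by rw [map_div₀, map_div₀]; linear_combination hanti2)
  have htiG : S.inG !![S.σ (α / p), S.σ (β / p); S.σ (β / p), S.σ (α / p)] :=
    S.inG_symm_shape (by rw [S.σσ, S.σσ, map_div₀, map_div₀]; linear_combination hnorm)
      (by rw [S.σσ, S.σσ, map_div₀, map_div₀]; linear_combination hanti2)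
  have htit : !![S.σ (α / p), S.σ (β / p); S.σ (β / p), S.σ (α / p)] *
      !![α / p, β / p; β / p, α / p] = 1 := by
    rw [Matrix.mul_fin_two, Matrix.one_fin_two]
    ext i j
    fin_cases i <;> fin_cases j <;> simp [map_div₀] <;>
      first
        | linear_combination hnorm
        | linear_combination hanti2
  have hOap : S.inOE (α / p) := by
    rcases eq_or_ne α 0 with h0 | hα0
    · exact Or.inl (by rw [h0, zero_div])
    · right
      rw [S.ν_div hα0 hp0, hνp]
      rcases hOα with h' | h'
      · exact absurd h' hα0
      · omega
  have hObp : S.inOE (β / p) := by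
    rcases eq_or_ne β 0 with h0 | hβ0
    · exact Or.inl (by rw [h0, zero_div])
    · right
      rw [S.ν_div hβ0 hp0, hνp]
      rcases hOβ with h' | h'
      · exact absurd h' hβ0
      · omega
  have hti_entries : ∀ i j,
      S.inOE (!![S.σ (α / p), S.σ (β / p); S.σ (β / p), S.σ (α / p)] i j) := by
    have h1' : S.inOE (S.σ α / S.σ p) := by
      have := S.inOE_σ hOap; rwa [map_div₀] at this
    have h2' : S.inOE (S.σ β / S.σ p) := by
      have := S.inOE_σ hObp; rwa [map_div₀] at this
    intro i j
    fin_cases i <;> fin_cases j <;> simp [map_div₀] <;> first | exact h1' | exact h2'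
  refine ⟨k * !![S.σ (α / p), S.σ (β / p); S.σ (β / p), S.σ (α / p)],
    !![α / p, β / p; β / p, α / p], ⟨⟨S.inG_mul hG htiG, ?_⟩, ?_⟩, ?_, ?_⟩
  · intro i j
    rw [Matrix.mul_apply, Fin.sum_univ_two]
    exact S.inOE_add (S.inOE_mul (hint i 0) (hti_entries 0 j))
      (S.inOE_mul (hint i 1) (hti_entries 1 j))
  · -- lower triangular: entry (0,1) vanishes
    rw [Matrix.mul_apply, Fin.sum_univ_two]
    have e0 : k 0 0 = α := rfl
    have e1 : k 0 1 = β := rfl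
    simp only [e0, e1]
    have h01 : !![S.σ (α / p), S.σ (β / p); S.σ (β / p), S.σ (α / p)] 0 1 = S.σ (β / p) := by
      simp
    have h11 : !![S.σ (α / p), S.σ (β / p); S.σ (β / p), S.σ (α / p)] 1 1 = S.σ (α / p) := by
      simp
    rw [h01, h11, map_div₀, map_div₀]
    rw [show α * (S.σ β / S.σ p) + β * (S.σ α / S.σ p) =
      (α * S.σ β + β * S.σ α) / S.σ p by ring, r1, zero_div]
  · -- torus membership
    refine ⟨α / p, β / p, by norm_num, by simpa using hnorm, ?_⟩
    refine S.inSqεF_of_anti ?_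
    rw [_root_.map_mul, S.σσ, map_div₀, map_div₀]
    linear_combination hanti2
  · rw [Matrix.mul_assoc, htit, Matrix.mul_one]

end Setting

/-- `K = B^op·T_{1,1}`, and consequently
`K^η = (B^op)^η·(T_{1,1})^η`, where `H^η = ηHη⁻¹` with `η = diag(1,ϖ)`. -/
theorem statement12 {E : Type*} [Field E] (S : Setting E) :
    S.Kset = S.Bop * S.Tset 1 1 ∧
    ((fun k => S.ηmat * k * S.ηinv) '' S.Kset) =
      ((fun k => S.ηmat * k * S.ηinv) '' S.Bop) *
        ((fun k => S.ηmat * k * S.ηinv) '' S.Tset 1 1) := by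
  have h1 : S.Kset = S.Bop * S.Tset 1 1 := by
    ext k
    constructor
    · intro hk
      obtain ⟨b, t, hb, ht, rfl⟩ := S.K_sub_BT hk
      exact Set.mul_mem_mul hb ht
    · intro hk
      rw [Set.mem_mul] at hk
      obtain ⟨x, hx, y, hy, rfl⟩ := hk
      exact S.Kset_mul hx.1 (S.T_sub_K hy)
  refine ⟨h1, ?_⟩
  have hinv : S.ηinv * S.ηmat = 1 := by
    rw [Setting.ηinv, Setting.ηmat, Matrix.mul_fin_two, Matrix.one_fin_two]
    norm_num [inv_mul_cancel₀ S.ϖ_ne_zero]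
  have hconj : ∀ x y : Matrix (Fin 2) (Fin 2) E,
      (S.ηmat * x * S.ηinv) * (S.ηmat * y * S.ηinv) = S.ηmat * (x * y) * S.ηinv := by
    intro x y
    calc (S.ηmat * x * S.ηinv) * (S.ηmat * y * S.ηinv)
        = S.ηmat * (x * ((S.ηinv * S.ηmat) * (y * S.ηinv))) := by
          simp only [Matrix.mul_assoc]
      _ = S.ηmat * (x * (y * S.ηinv)) := by rw [hinv, Matrix.one_mul]
      _ = S.ηmat * (x * y) * S.ηinv := by simp only [Matrix.mul_assoc]
  ext z
  constructor
  · rintro ⟨k, hk, rfl⟩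
    rw [h1, Set.mem_mul] at hk
    obtain ⟨x, hx, y, hy, rfl⟩ := hk
    rw [Set.mem_mul]
    exact ⟨_, ⟨x, hx, rfl⟩, _, ⟨y, hy, rfl⟩, hconj x y⟩
  · intro hz
    rw [Set.mem_mul] at hz
    obtain ⟨u, ⟨x, hx, rfl⟩, v, ⟨y, hy, rfl⟩, rfl⟩ := hz
    refine ⟨x * y, ?_, (hconj x y).symm⟩
    rw [h1]
    exact Set.mul_mem_mul hx hy
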